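/- If w : [0,T] → ℝ is differentiable, |w(0)| ≤ 1/2, and w'(t) = c(t)·(1/2 − w(t)) − d(t)·(1/2 + w(t)) for continuous nonnegative functions c, d : [0,T] → ℝ, then |w(t)| ≤ 1/2 for all t ∈ [0,T]. -/

import Mathlib

open MeasureTheory intervalIntegral Set

theorem stmt_1 (T : ℝ) (hT : 0 < T) (w c d : ℝ → ℝ)
    (hc : ContinuousOn c (Set.Icc 0 T)) (hd : ContinuousOn d (Set.Icc 0 T))
    (hc0 : ∀ t ∈ Set.Icc (0:ℝ) T, 0 ≤ c t)
    (hd0 : ∀ t ∈ Set.Icc (0:ℝ) T, 0 ≤ d t)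
    (hw : ∀ t ∈ Set.Icc (0:ℝ) T,
      HasDerivAt w (c t * (1/2 - w t) - d t * (1/2 + w t)) t)
    (hw0 : |w 0| ≤ 1/2) :
    ∀ t ∈ Set.Icc (0:ℝ) T, |w t| ≤ 1/2 := by
  -- continuous extension of c + d to all of ℝ
  set e : ℝ → ℝ := Set.IccExtend hT.le ((Set.Icc 0 T).restrict (fun t => c t + d t))
    with he
  have hecont : Continuous e := Continuous.Icc_extend' ((hc.add hd).restrict)
  have heq : ∀ t ∈ Set.Icc (0:ℝ) T, e t = c t + d t := fun t ht => by
    rw [he, Set.IccExtend_of_mem _ _ ht]; rfl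
  -- antiderivative g
  set g : ℝ → ℝ := fun t => ∫ s in (0:ℝ)..t, e s with hg
  have hg' : ∀ t : ℝ, HasDerivAt g (e t) t := fun t =>
    intervalIntegral.integral_hasDerivAt_right (hecont.intervalIntegrable _ _)
      hecont.aestronglyMeasurable.stronglyMeasurableAtFilter hecont.continuousAt
  have hg0 : g 0 = 0 := by simp [hg]
  -- the two auxiliary functions
  set F : ℝ → ℝ := fun t => Real.exp (g t) * (w t - 1/2) with hF
  set G : ℝ → ℝ := fun t => Real.exp (g t) * (w t + 1/2) with hG
  have hFd : ∀ t ∈ Set.Icc (0:ℝ) T, HasDerivAt F (-(Real.exp (g t) * d t)) t := by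
    intro t ht
    have h1 := (((hg' t).exp).mul ((hw t ht).sub_const (1/2)))
    convert h1 using 1
    · rfl
    · rfl
    · rfl
    rw [heq t ht]; ring
  have hGd : ∀ t ∈ Set.Icc (0:ℝ) T, HasDerivAt G (Real.exp (g t) * c t) t := by
    intro t ht
    have h1 := (((hg' t).exp).mul ((hw t ht).add_const (1/2)))
    convert h1 using 1
    · rfl
    · rfl
    · rfl
    rw [heq t ht]; ring
  have hFc : ContinuousOn F (Set.Icc 0 T) := fun t ht =>
    ((hFd t ht).continuousAt).continuousWithinAt
  have hGc : ContinuousOn G (Set.Icc 0 T) := fun t ht =>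
    ((hGd t ht).continuousAt).continuousWithinAt
  have hint : interior (Set.Icc (0:ℝ) T) ⊆ Set.Icc 0 T := interior_subset
  have hFanti : AntitoneOn F (Set.Icc 0 T) := by
    apply antitoneOn_of_hasDerivWithinAt_nonpos (convex_Icc 0 T) hFc
      (f' := fun t => -(Real.exp (g t) * d t))
    · intro x hx
      exact (hFd x (hint hx)).hasDerivWithinAt
    · intro x hx
      have := mul_nonneg (Real.exp_pos (g x)).le (hd0 x (hint hx))
      linarith
  have hGmono : MonotoneOn G (Set.Icc 0 T) := by
    apply monotoneOn_of_hasDerivWithinAt_nonneg (convex_Icc 0 T) hGc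
      (f' := fun t => Real.exp (g t) * c t)
    · intro x hx
      exact (hGd x (hint hx)).hasDerivWithinAt
    · intro x hx
      exact mul_nonneg (Real.exp_pos (g x)).le (hc0 x (hint hx))
  have h0mem : (0:ℝ) ∈ Set.Icc (0:ℝ) T := ⟨le_refl 0, hT.le⟩
  rw [abs_le] at hw0
  intro t ht
  rw [abs_le]
  have hFt : F t ≤ F 0 := hFanti h0mem ht ht.1
  have hGt : G 0 ≤ G t := hGmono h0mem ht ht.1
  have hexp : (0:ℝ) < Real.exp (g t) := Real.exp_pos _
  have hF0 : F 0 ≤ 0 := by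
    rw [hF]; simp only [hg0, Real.exp_zero, one_mul]; linarith
  have hG0 : 0 ≤ G 0 := by
    rw [hG]; simp only [hg0, Real.exp_zero, one_mul]; linarith
  have h1 : Real.exp (g t) * (w t - 1/2) ≤ 0 := hFt.trans hF0
  have h2 : 0 ≤ Real.exp (g t) * (w t + 1/2) := hG0.trans hGt
  constructor
  · nlinarith [h2, hexp]
  · nlinarith [h1, hexp]
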